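/- arXiv:1701.07286 — 2 statements merged into one kernel-verified Lean document; each statement's English description precedes it below -/
import Mathlib

section
/- Suppose $1 \leq m \leq n$ are integers, $A \subseteq \mathbb{R}^n$, $a \in \mathbb{R}^n$, and $T$ is an $m$-dimensional subspace of $\mathbb{R}^n$ with $T \subseteq \mathrm{Tan}^m_*(\mathcal{H}^m \llcorner A, a)$. Then for every $\epsilon > 0$ there exist $\rho > 0$ and $\eta > 0$ such that $\mathcal{H}^m(\mathbf{C}(T, z, \epsilon r, \epsilon r) \cap \{x - a : x \in A\}) \geq \eta r^m$ for every $z \in T \cap \mathbf{B}(0,r)$ and every $0 < r \leq \rho$. -/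
open MeasureTheory Metric Filter Set
open scoped ENNReal Topology

/-- Volume of the unit ball in `ℝ^m`, i.e. `α(m)`. -/
noncomputable def ballVol (m : ℕ) : ℝ≥0∞ :=
  volume (Metric.closedBall (0 : EuclideanSpace ℝ (Fin m)) 1)

variable {X : Type*} [NormedAddCommGroup X] [NormedSpace ℝ X] [MeasurableSpace X]

/-- The cone `𝐄(a,v,ε) = {x : |r(x-a) - v| < ε for some r > 0}`. -/
def ECone (a v : X) (ε : ℝ) : Set X :=
  {x | ∃ r : ℝ, 0 < r ∧ ‖r • (x - a) - v‖ < ε}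

/-- Upper `m`-dimensional density `Θ^{*m}(φ, a)`. -/
noncomputable def upperDensity (m : ℕ) (φ : Measure X) (a : X) : ℝ≥0∞ :=
  Filter.limsup (fun r : ℝ =>
    φ (Metric.closedBall a r) / (ballVol m * ENNReal.ofReal (r ^ m))) (𝓝[>] (0 : ℝ))

/-- Lower `m`-dimensional density `Θ^m_*(φ, a)`. -/
noncomputable def lowerDensity (m : ℕ) (φ : Measure X) (a : X) : ℝ≥0∞ :=
  Filter.liminf (fun r : ℝ =>
    φ (Metric.closedBall a r) / (ballVol m * ENNReal.ofReal (r ^ m))) (𝓝[>] (0 : ℝ))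

/-- The `m`-dimensional approximate upper tangent cone `Tan^{*m}(φ, a)`. -/
def TanUpper (m : ℕ) (φ : Measure X) (a : X) : Set X :=
  {v | ∀ ε : ℝ, 0 < ε → 0 < upperDensity m (φ.restrict (ECone a v ε)) a}

/-- The `m`-dimensional approximate lower tangent cone `Tan^m_*(φ, a)`. -/
def TanLower (m : ℕ) (φ : Measure X) (a : X) : Set X :=
  {v | ∀ ε : ℝ, 0 < ε → ∃ η : ℝ, 0 < η ∧ ∀ r : ℝ, 0 < r → r ≤ η →
    ENNReal.ofReal (η * r ^ m) ≤ φ (Metric.ball (a + r • v) (ε * r))}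

/-- Orthogonal projection onto a subspace, as a map into the ambient space. -/
noncomputable def projS {n : ℕ} (T : Submodule ℝ (EuclideanSpace ℝ (Fin n)))
    (x : EuclideanSpace ℝ (Fin n)) : EuclideanSpace ℝ (Fin n) :=
  (Submodule.orthogonalProjection T x : EuclideanSpace ℝ (Fin n))

lemma projS_norm_le {n : ℕ} (T : Submodule ℝ (EuclideanSpace ℝ (Fin n)))
    (x : EuclideanSpace ℝ (Fin n)) : ‖projS T x‖ ≤ ‖x‖ := by
  have := ContinuousLinearMap.le_of_opNorm_le (Submodule.orthogonalProjection T)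
    (Submodule.orthogonalProjectionOnto_norm_le T) x
  simpa [projS] using this

lemma projS_add {n : ℕ} (T : Submodule ℝ (EuclideanSpace ℝ (Fin n)))
    (x y : EuclideanSpace ℝ (Fin n)) : projS T (x + y) = projS T x + projS T y := by
  simp [projS, map_add]

set_option maxHeartbeats 1000000 in
theorem stmt11 {m n : ℕ} (hm : 1 ≤ m) (hmn : m ≤ n)
    (A : Set (EuclideanSpace ℝ (Fin n))) (a : EuclideanSpace ℝ (Fin n))
    (T : Submodule ℝ (EuclideanSpace ℝ (Fin n))) (hT : Module.finrank ℝ T = m)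
    (hTan : (T : Set (EuclideanSpace ℝ (Fin n))) ⊆ TanLower m (μH[(m : ℝ)].restrict A) a) :
    ∀ ε : ℝ, 0 < ε → ∃ ρ : ℝ, 0 < ρ ∧ ∃ η : ℝ, 0 < η ∧
      ∀ r : ℝ, 0 < r → r ≤ ρ → ∀ z ∈ (T : Set (EuclideanSpace ℝ (Fin n))), ‖z‖ ≤ r →
        ENNReal.ofReal (η * r ^ m) ≤
          μH[(m : ℝ)] ({x | ‖projS T (x - z)‖ < ε * r ∧ ‖projS Tᗮ (x - z)‖ < ε * r} ∩
            ((fun x => x - a) '' A)) := by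
  intro ε hε
  set K : Set (EuclideanSpace ℝ (Fin n)) := (T : Set (EuclideanSpace ℝ (Fin n))) ∩ closedBall 0 1 with hK
  have hKc : IsCompact K := (isCompact_closedBall (0 : EuclideanSpace ℝ (Fin n)) 1).inter_left T.closed_of_finiteDimensional
  have hcover : K ⊆ ⋃ v ∈ K, ball v (ε / 2) := by
    intro v hv
    exact mem_biUnion hv (mem_ball_self (by linarith))
  obtain ⟨t, htK, htfin, htcov⟩ :=
    hKc.elim_finite_subcover_image (fun v _ => isOpen_ball) hcover
  -- t is nonempty since 0 ∈ K
  have h0K : (0 : EuclideanSpace ℝ (Fin n)) ∈ K := ⟨T.zero_mem, by simp⟩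
  have htne : t.Nonempty := by
    rcases mem_iUnion₂.1 (htcov h0K) with ⟨v, hv, -⟩
    exact ⟨v, hv⟩
  -- for each v ∈ t, apply hTan with ε/2
  have hsel : ∀ v ∈ t, ∃ η : ℝ, 0 < η ∧ ∀ r : ℝ, 0 < r → r ≤ η →
      ENNReal.ofReal (η * r ^ m) ≤
        (μH[(m : ℝ)].restrict A) (ball (a + r • v) ((ε / 2) * r)) := by
    intro v hv
    exact hTan (htK hv).1 (ε / 2) (by linarith)
  choose! f hf0 hf using hsel
  set F := htfin.toFinset
  have hFne : F.Nonempty := by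
    rcases htne with ⟨v, hv⟩; exact ⟨v, htfin.mem_toFinset.2 hv⟩
  set ρ : ℝ := F.inf' hFne f with hρdef
  have hρpos : 0 < ρ := by
    rw [hρdef, Finset.lt_inf'_iff]
    exact fun v hv => hf0 v (htfin.mem_toFinset.1 hv)
  refine ⟨ρ, hρpos, ρ, hρpos, ?_⟩
  intro r hr hrρ z hzT hzr
  -- find v ∈ t near w := r⁻¹ • z
  set w : EuclideanSpace ℝ (Fin n) := r⁻¹ • z with hw
  have hwK : w ∈ K := by
    constructor
    · exact T.smul_mem _ hzT
    · simp only [mem_closedBall, dist_zero_right, hw, norm_smul, Real.norm_eq_abs,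
        abs_inv, abs_of_pos hr]
      rw [inv_mul_le_iff₀ hr]
      simpa using hzr
  rcases mem_iUnion₂.1 (htcov hwK) with ⟨v, hvt, hvw⟩
  have hvF : v ∈ F := htfin.mem_toFinset.2 hvt
  have hz : z = r • w := by
    rw [hw, smul_smul, mul_inv_cancel₀ (ne_of_gt hr), one_smul]
  have hzv : ‖r • v - z‖ < ε / 2 * r := by
    rw [hz, ← smul_sub, norm_smul, Real.norm_eq_abs, abs_of_pos hr]
    have : ‖v - w‖ < ε / 2 := by
      rw [mem_ball] at hvw
      rwa [← dist_eq_norm, dist_comm]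
    calc r * ‖v - w‖ < r * (ε / 2) := by exact (mul_lt_mul_iff_right₀ hr).2 this
      _ = ε / 2 * r := by ring
  -- measure bound from hf
  have hrfv : r ≤ f v := le_trans hrρ (Finset.inf'_le f hvF)
  have hmeas := hf v hvt r hr hrfv
  have hmin : ENNReal.ofReal (ρ * r ^ m) ≤ ENNReal.ofReal (f v * r ^ m) := by
    apply ENNReal.ofReal_le_ofReal
    exact mul_le_mul_of_nonneg_right (Finset.inf'_le f hvF) (by positivity)
  -- restrict to intersection
  have hrest : (μH[(m : ℝ)].restrict A) (ball (a + r • v) ((ε / 2) * r)) =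
      μH[(m : ℝ)] (ball (a + r • v) ((ε / 2) * r) ∩ A) :=
    Measure.restrict_apply measurableSet_ball
  -- translation
  set g : EuclideanSpace ℝ (Fin n) → EuclideanSpace ℝ (Fin n) := fun x => x - a with hg
  have hgiso : Isometry g := (IsometryEquiv.subRight a).isometry
  have himg : g '' (ball (a + r • v) ((ε / 2) * r) ∩ A) =
      ball (r • v) ((ε / 2) * r) ∩ (g '' A) := by
    rw [image_inter hgiso.injective]
    congr 1
    have := (IsometryEquiv.subRight a).image_ball (a + r • v) ((ε / 2) * r)
    simpa [hg] using this
  have htrans : μH[(m : ℝ)] (ball (r • v) ((ε / 2) * r) ∩ (g '' A)) =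
      μH[(m : ℝ)] (ball (a + r • v) ((ε / 2) * r) ∩ A) := by
    rw [← himg]
    exact hgiso.hausdorffMeasure_image (Or.inl (by positivity)) _
  -- inclusion into the cone
  have hincl : ball (r • v) ((ε / 2) * r) ⊆
      {x | ‖projS T (x - z)‖ < ε * r ∧ ‖projS Tᗮ (x - z)‖ < ε * r} := by
    intro x hx
    rw [mem_ball, dist_eq_norm] at hx
    have hdecomp : x - z = (x - r • v) + (r • v - z) := by abel
    have hTv : (r • v - z) ∈ T := T.sub_mem (T.smul_mem r (htK hvt).1) hzT
    constructor
    · rw [hdecomp, projS_add]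
      calc ‖projS T (x - r • v) + projS T (r • v - z)‖
          ≤ ‖projS T (x - r • v)‖ + ‖projS T (r • v - z)‖ := norm_add_le _ _
        _ ≤ ‖x - r • v‖ + ‖r • v - z‖ := add_le_add (projS_norm_le _ _) (projS_norm_le _ _)
        _ < ε / 2 * r + ε / 2 * r := add_lt_add hx hzv
        _ = ε * r := by ring
    · rw [hdecomp, projS_add]
      have hzero : projS Tᗮ (r • v - z) = 0 := by
        rw [projS, Submodule.orthogonalProjectionOnto_apply_of_mem_orthogonal
          (Submodule.le_orthogonal_orthogonal T hTv)]
        simp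
      rw [hzero, add_zero]
      calc ‖projS Tᗮ (x - r • v)‖ ≤ ‖x - r • v‖ := projS_norm_le _ _
        _ < ε / 2 * r := hx
        _ < ε * r := by nlinarith
  calc ENNReal.ofReal (ρ * r ^ m) ≤ ENNReal.ofReal (f v * r ^ m) := hmin
    _ ≤ (μH[(m : ℝ)].restrict A) (ball (a + r • v) ((ε / 2) * r)) := hmeas
    _ = μH[(m : ℝ)] (ball (r • v) ((ε / 2) * r) ∩ (g '' A)) := by rw [hrest, htrans]
    _ ≤ μH[(m : ℝ)] ({x | ‖projS T (x - z)‖ < ε * r ∧ ‖projS Tᗮ (x - z)‖ < ε * r} ∩ (g '' A)) :=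
        measure_mono (inter_subset_inter_left _ hincl)
end

section
/- For each $\gamma > 1$ and $\gamma^{-1} < \alpha < (\gamma-1)^{-1}$, let $A_{\alpha,\gamma} \subseteq \mathbb{R}^2$ be the union of the segment $\{(s,0) : -1 \leq s \leq 1\}$ with the vertical segments $\{(\pm n^{-\alpha}, t) : 0 \leq t \leq n^{-\alpha\gamma}\}$ for all integers $n \geq 1$. Then: (a) $\mathcal{H}^1(A_{\alpha,\gamma}) < \infty$; (b) the lower $1$-dimensional density $\Theta^1_*(\mathcal{H}^1 \llcorner A_{\alpha,\gamma}, 0) = \infty$; (c) $\mathrm{Tan}^1_*(\mathcal{H}^1 \llcorner A_{\alpha,\gamma}, 0) = \mathrm{Tan}^{*1}(\mathcal{H}^1 \llcorner A_{\alpha,\gamma}, 0) = \mathbb{R} \times \{0\}$. -/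
open MeasureTheory Metric Filter Set
open scoped ENNReal Topology

noncomputable section
abbrev E2 := EuclideanSpace ℝ (Fin 2)

def pt (x y : ℝ) : E2 := (WithLp.equiv 2 (Fin 2 → ℝ)).symm ![x, y]

@[simp] lemma pt0 (x y : ℝ) : pt x y 0 = x := rfl
@[simp] lemma pt1 (x y : ℝ) : pt x y 1 = y := rfl

lemma E2ext {p q : E2} (h0 : p 0 = q 0) (h1 : p 1 = q 1) : p = q := by
  ext i; fin_cases i <;> assumption

lemma dist_pts (p q : E2) : dist p q = Real.sqrt ((p 0 - q 0)^2 + (p 1 - q 1)^2) := by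
  rw [EuclideanSpace.dist_eq, Fin.sum_univ_two]
  simp [Real.dist_eq, sq_abs]

lemma abs_coord_le_dist (p q : E2) (i : Fin 2) : |p i - q i| ≤ dist p q := by
  rw [dist_pts, ← Real.sqrt_sq_eq_abs]
  apply Real.sqrt_le_sqrt
  fin_cases i
  · show (p 0 - q 0)^2 ≤ (p 0 - q 0)^2 + (p 1 - q 1)^2
    nlinarith [sq_nonneg (p 1 - q 1)]
  · show (p 1 - q 1)^2 ≤ (p 0 - q 0)^2 + (p 1 - q 1)^2
    nlinarith [sq_nonneg (p 0 - q 0)]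

lemma norm_le_of_coords {p : E2} {a b : ℝ} (h0 : |p 0| ≤ a) (h1 : |p 1| ≤ b) :
    ‖p‖ ≤ a + b := by
  have := dist_pts p 0
  simp only [dist_zero_right] at this
  rw [this]
  have ha : (0:ℝ) ≤ a := le_trans (abs_nonneg _) h0
  have hb : (0:ℝ) ≤ b := le_trans (abs_nonneg _) h1
  have h0' : (p 0 - (0:E2) 0)^2 ≤ a^2 := by
    have : (0:E2) 0 = 0 := rfl
    rw [this, sub_zero, ← sq_abs]; exact pow_le_pow_left₀ (abs_nonneg _) h0 2
  have h1' : (p 1 - (0:E2) 1)^2 ≤ b^2 := by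
    have : (0:E2) 1 = 0 := rfl
    rw [this, sub_zero, ← sq_abs]; exact pow_le_pow_left₀ (abs_nonneg _) h1 2
  calc Real.sqrt ((p 0 - (0:E2) 0)^2 + (p 1 - (0:E2) 1)^2) ≤ Real.sqrt ((a+b)^2) := by
        apply Real.sqrt_le_sqrt; nlinarith
    _ = a + b := Real.sqrt_sq (by linarith)

lemma lip_vert (c : ℝ) : LipschitzWith 1 (fun t : ℝ => pt c t) := by
  apply LipschitzWith.of_dist_le_mul
  intro x y
  rw [dist_pts]
  simp [Real.dist_eq, Real.sqrt_sq_eq_abs]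

lemma lip_horiz : LipschitzWith 1 (fun t : ℝ => pt t 0) := by
  apply LipschitzWith.of_dist_le_mul
  intro x y
  rw [dist_pts]
  simp [Real.dist_eq, Real.sqrt_sq_eq_abs]

/-- upper bound for Hausdorff measure of images of Icc -/
lemma H_image_le {f : ℝ → E2} (hf : LipschitzWith 1 f) (u w : ℝ) :
    μH[(1:ℝ)] (f '' Icc u w) ≤ ENNReal.ofReal (w - u) := by
  calc μH[(1:ℝ)] (f '' Icc u w) ≤ (1 : ℝ≥0∞) ^ (1:ℝ) * μH[(1:ℝ)] (Icc u w) :=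
        hf.hausdorffMeasure_image_le zero_le_one _
    _ = μH[(1:ℝ)] (Icc u w) := by simp
    _ = volume (Icc u w) := by rw [MeasureTheory.hausdorffMeasure_real]
    _ = ENNReal.ofReal (w - u) := Real.volume_Icc

/-- lower bound via coordinate projection -/
lemma H_ge_of_proj (S : Set E2) (i : Fin 2) (u w : ℝ)
    (h : ∀ x ∈ Icc u w, ∃ p ∈ S, p i = x) :
    ENNReal.ofReal (w - u) ≤ μH[(1:ℝ)] S := by
  have lip : LipschitzWith 1 (fun p : E2 => p i) := by
    apply LipschitzWith.of_dist_le_mul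
    intro p q
    simpa [Real.dist_eq, one_mul] using abs_coord_le_dist p q i
  have him : Icc u w ⊆ (fun p : E2 => p i) '' S := by
    intro x hx
    obtain ⟨p, hp, hpx⟩ := h x hx
    exact ⟨p, hp, hpx⟩
  calc ENNReal.ofReal (w - u) = volume (Icc u w) := Real.volume_Icc.symm
    _ = μH[(1:ℝ)] (Icc u w) := by rw [MeasureTheory.hausdorffMeasure_real]
    _ ≤ μH[(1:ℝ)] ((fun p : E2 => p i) '' S) := measure_mono him
    _ ≤ (1 : ℝ≥0∞) ^ (1:ℝ) * μH[(1:ℝ)] S := lip.hausdorffMeasure_image_le zero_le_one _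
    _ = μH[(1:ℝ)] S := by simp

/-! ### Segments -/

def Vseg (c u w : ℝ) : Set E2 := {p : E2 | p 0 = c ∧ u ≤ p 1 ∧ p 1 ≤ w}

lemma Vseg_eq_image (c u w : ℝ) : Vseg c u w = (fun t => pt c t) '' Icc u w := by
  ext p
  constructor
  · rintro ⟨h0, h1, h2⟩
    exact ⟨p 1, ⟨h1, h2⟩, E2ext (by simp [h0]) (by simp)⟩
  · rintro ⟨t, ht, rfl⟩
    exact ⟨rfl, ht.1, ht.2⟩

lemma coord_continuous (i : Fin 2) : Continuous (fun p : E2 => p i) :=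
  (EuclideanSpace.proj (𝕜 := ℝ) i).continuous

lemma Vseg_closed (c u w : ℝ) : IsClosed (Vseg c u w) := by
  have : Vseg c u w = (fun p : E2 => p 0) ⁻¹' {c} ∩
      ((fun p : E2 => p 1) ⁻¹' Ici u ∩ (fun p : E2 => p 1) ⁻¹' Iic w) := by
    ext p; simp [Vseg, and_assoc]
  rw [this]
  exact ((isClosed_singleton.preimage (coord_continuous 0)).inter
    ((isClosed_Ici.preimage (coord_continuous 1)).inter
      (isClosed_Iic.preimage (coord_continuous 1))))

lemma H_Vseg_le (c u w : ℝ) : μH[(1:ℝ)] (Vseg c u w) ≤ ENNReal.ofReal (w - u) := by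
  rw [Vseg_eq_image]; exact H_image_le (lip_vert c) u w

lemma H_Vseg_ge {S : Set E2} {c u w : ℝ} (h : Vseg c u w ⊆ S) :
    ENNReal.ofReal (w - u) ≤ μH[(1:ℝ)] S := by
  apply H_ge_of_proj S 1 u w
  intro x hx
  exact ⟨pt c x, h ⟨rfl, hx.1, hx.2⟩, rfl⟩

lemma H_horiz_ge {S : Set E2} {u w : ℝ}
    (h : ∀ x ∈ Icc u w, pt x 0 ∈ S) :
    ENNReal.ofReal (w - u) ≤ μH[(1:ℝ)] S := by
  apply H_ge_of_proj S 0 u w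
  intro x hx
  exact ⟨pt x 0, h x hx, rfl⟩

/-! ### The set A -/

def cc (α : ℝ) (n : ℕ) : ℝ := ((n:ℝ)+1) ^ (-α)
def hh (α γ : ℝ) (n : ℕ) : ℝ := ((n:ℝ)+1) ^ (-(α*γ))

section params
variable {γ α : ℝ} (hγ : 1 < γ) (hα1 : γ⁻¹ < α) (hα2 : α < (γ - 1)⁻¹)

include hγ in
lemma hγ0 : (0:ℝ) < γ := lt_trans one_pos hγ
include hγ hα1 in
lemma hα0 : (0:ℝ) < α := lt_trans (inv_pos.2 (hγ0 hγ)) hα1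
include hγ hα1 in
lemma hαγ1 : 1 < α * γ := by
  have h := mul_lt_mul_of_pos_right hα1 (hγ0 hγ)
  rwa [inv_mul_cancel₀ (ne_of_gt (hγ0 hγ))] at h
include hγ hα1 hα2 in
lemma hσpos : 0 < 1 + α - α * γ := by
  have hγ1 : (0:ℝ) < γ - 1 := by linarith
  have h := mul_lt_mul_of_pos_right hα2 hγ1
  rw [inv_mul_cancel₀ (ne_of_gt hγ1)] at h
  nlinarith

lemma cc_pos (α : ℝ) (n : ℕ) : 0 < cc α n :=
  Real.rpow_pos_of_pos (by positivity) _
lemma hh_pos (α γ : ℝ) (n : ℕ) : 0 < hh α γ n :=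
  Real.rpow_pos_of_pos (by positivity) _

include hγ hα1 in
lemma hh_le_cc (n : ℕ) : hh α γ n ≤ cc α n := by
  apply Real.rpow_le_rpow_of_exponent_le (by push_cast; linarith [Nat.cast_nonneg (α := ℝ) n])
  nlinarith [hα0 hγ hα1, hγ0 hγ]

include hγ hα1 in
lemma cc_le_one (n : ℕ) : cc α n ≤ 1 := by
  rw [show (1:ℝ) = ((n:ℝ)+1) ^ (0:ℝ) by simp]
  apply Real.rpow_le_rpow_of_exponent_le (by push_cast; linarith [Nat.cast_nonneg (α := ℝ) n])
  linarith [hα0 hγ hα1]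

include hγ hα1 in
lemma cc_strictAnti : StrictAnti (cc α) := by
  intro m n hmn
  have hα : (0:ℝ) < α := hα0 hγ hα1
  have h1 : (0:ℝ) < (m:ℝ)+1 := by positivity
  have h2 : ((m:ℝ)+1) < ((n:ℝ)+1) := by exact_mod_cast Nat.succ_lt_succ hmn
  have := Real.rpow_lt_rpow (le_of_lt h1) h2 hα
  rw [cc, cc, Real.rpow_neg (le_of_lt h1), Real.rpow_neg (by positivity)]
  exact inv_strictAnti₀ (Real.rpow_pos_of_pos h1 α) this

lemma hh_eq_cc_rpow (n : ℕ) : hh α γ n = (cc α n) ^ γ := by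
  rw [hh, cc, ← Real.rpow_mul (by positivity)]
  ring_nf

end params

def horizPart : Set E2 := {p : E2 | p 1 = 0 ∧ |p 0| ≤ 1}
def hairPart (α γ : ℝ) (n : ℕ) : Set E2 :=
  {p : E2 | (p 0 = ((n : ℝ) + 1) ^ (-α) ∨ p 0 = -(((n : ℝ) + 1) ^ (-α))) ∧
    0 ≤ p 1 ∧ p 1 ≤ ((n : ℝ) + 1) ^ (-(α * γ))}

def Adef (α γ : ℝ) : Set E2 := horizPart ∪ ⋃ n : ℕ, hairPart α γ n

lemma hairPart_eq (α γ : ℝ) (n : ℕ) :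
    hairPart α γ n = Vseg (cc α n) 0 (hh α γ n) ∪ Vseg (-(cc α n)) 0 (hh α γ n) := by
  ext p
  simp only [hairPart, Vseg, cc, hh, mem_union, mem_setOf_eq]
  tauto

lemma horizPart_closed : IsClosed horizPart := by
  have : horizPart = (fun p : E2 => p 1) ⁻¹' {0} ∩ (fun p : E2 => |p 0|) ⁻¹' Iic 1 := by
    ext p; simp [horizPart]
  rw [this]
  exact (isClosed_singleton.preimage (coord_continuous 1)).inter
    (isClosed_Iic.preimage ((coord_continuous 0).abs))

lemma Adef_measurable (α γ : ℝ) : MeasurableSet (Adef α γ) := by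
  apply MeasurableSet.union horizPart_closed.measurableSet
  exact MeasurableSet.iUnion fun n => by
    rw [hairPart_eq]
    exact ((Vseg_closed _ _ _).union (Vseg_closed _ _ _)).measurableSet

lemma horizPart_eq_image : horizPart = (fun t => pt t 0) '' Icc (-1) 1 := by
  ext p
  constructor
  · rintro ⟨h1, h0⟩
    exact ⟨p 0, abs_le.1 h0, E2ext (by simp) (by simp [h1])⟩
  · rintro ⟨t, ht, rfl⟩
    exact ⟨rfl, abs_le.2 ht⟩

section params
variable {γ α : ℝ} (hγ : 1 < γ) (hα1 : γ⁻¹ < α) (hα2 : α < (γ - 1)⁻¹)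

include hγ hα1 in
lemma partA : μH[(1:ℝ)] (Adef α γ) < ⊤ := by
  have hhair : ∀ n, μH[(1:ℝ)] (hairPart α γ n) ≤ ENNReal.ofReal (2 * hh α γ n) := by
    intro n
    rw [hairPart_eq]
    calc μH[(1:ℝ)] (Vseg (cc α n) 0 (hh α γ n) ∪ Vseg (-(cc α n)) 0 (hh α γ n))
        ≤ μH[(1:ℝ)] (Vseg (cc α n) 0 (hh α γ n)) + μH[(1:ℝ)] (Vseg (-(cc α n)) 0 (hh α γ n)) :=
          measure_union_le _ _
      _ ≤ ENNReal.ofReal (hh α γ n - 0) + ENNReal.ofReal (hh α γ n - 0) :=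
          add_le_add (H_Vseg_le _ _ _) (H_Vseg_le _ _ _)
      _ = ENNReal.ofReal (2 * hh α γ n) := by
          rw [← ENNReal.ofReal_add (by linarith [hh_pos α γ n]) (by linarith [hh_pos α γ n])]
          ring_nf
  have hsum : Summable (fun n => 2 * hh α γ n) := by
    apply Summable.mul_left
    have base : Summable (fun n : ℕ => (n:ℝ) ^ (-(α * γ))) :=
      Real.summable_nat_rpow.2 (by linarith [hαγ1 hγ hα1])
    have := base.comp_injective Nat.succ_injective
    apply this.congr
    intro n
    simp only [Function.comp_apply, hh]
    norm_num [Nat.succ_eq_add_one]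
  calc μH[(1:ℝ)] (Adef α γ)
      ≤ μH[(1:ℝ)] horizPart + μH[(1:ℝ)] (⋃ n, hairPart α γ n) := measure_union_le _ _
    _ ≤ ENNReal.ofReal (1 - (-1)) + ∑' n, ENNReal.ofReal (2 * hh α γ n) := by
        apply add_le_add
        · rw [horizPart_eq_image]; exact H_image_le lip_horiz _ _
        · exact le_trans (measure_iUnion_le _) (ENNReal.tsum_le_tsum hhair)
    _ < ⊤ := by
        rw [← ENNReal.ofReal_tsum_of_nonneg (fun n => by linarith [hh_pos α γ n]) hsum]
        exact ENNReal.add_lt_top.2 ⟨ENNReal.ofReal_lt_top, ENNReal.ofReal_lt_top⟩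

end params

lemma rpow_anti_base {x y e : ℝ} (hx : 0 < x) (hxy : x ≤ y) (he : e ≤ 0) :
    y ^ e ≤ x ^ e := by
  have hy : 0 < y := lt_of_lt_of_le hx hxy
  rw [show e = -(-e) by ring, Real.rpow_neg (le_of_lt hy), Real.rpow_neg (le_of_lt hx)]
  exact inv_anti₀ (Real.rpow_pos_of_pos hx _)
    (Real.rpow_le_rpow (le_of_lt hx) hxy (by linarith))

section params
variable {γ α : ℝ} (hγ : 1 < γ) (hα1 : γ⁻¹ < α) (hα2 : α < (γ - 1)⁻¹)

include hγ hα1 in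
lemma hair_in_ball (n : ℕ) : Vseg (cc α n) 0 (hh α γ n) ⊆ closedBall (0:E2) (2 * cc α n) := by
  rintro p ⟨h0, h1, h2⟩
  rw [mem_closedBall_zero_iff]
  have : ‖p‖ ≤ cc α n + cc α n := norm_le_of_coords
    (by rw [h0, abs_of_pos (cc_pos α n)])
    (by rw [abs_of_nonneg h1]; exact le_trans h2 (hh_le_cc hγ hα1 n))
  linarith

lemma hair_in_A (n : ℕ) : Vseg (cc α n) 0 (hh α γ n) ⊆ Adef α γ := by
  rintro p ⟨h0, h1, h2⟩
  exact Or.inr (mem_iUnion.2 ⟨n, Or.inl h0, h1, h2⟩)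

include hγ hα1 in
lemma hair_lower {N : ℕ} (hN : 1 ≤ N) {r : ℝ} (hr : 2 * cc α N ≤ r) :
    ENNReal.ofReal ((N:ℝ) * (4*(N:ℝ)) ^ (-(α*γ))) ≤
      μH[(1:ℝ)] (closedBall (0:E2) r ∩ Adef α γ) := by
  classical
  set F := Finset.Icc N (2*N) with hF
  have hsub : ∀ n ∈ F, Vseg (cc α n) 0 (hh α γ n) ⊆ closedBall (0:E2) r ∩ Adef α γ := by
    intro n hn p hp
    refine ⟨?_, hair_in_A n hp⟩
    have h1 : p ∈ closedBall (0:E2) (2 * cc α n) := hair_in_ball hγ hα1 n hp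
    rw [mem_closedBall_zero_iff] at h1 ⊢
    have hcc : cc α n ≤ cc α N := (cc_strictAnti hγ hα1).antitone (Finset.mem_Icc.1 hn).1
    linarith
  have hdisj : (F : Set ℕ).PairwiseDisjoint (fun n => Vseg (cc α n) 0 (hh α γ n)) := by
    intro m _ n _ hmn
    apply Set.disjoint_left.2
    rintro p ⟨hm0, _⟩ ⟨hn0, _⟩
    exact hmn ((cc_strictAnti hγ hα1).injective (hm0 ▸ hn0))
  have hmeas : ∀ n ∈ F, MeasurableSet (Vseg (cc α n) 0 (hh α γ n)) :=
    fun n _ => (Vseg_closed _ _ _).measurableSet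
  calc ENNReal.ofReal ((N:ℝ) * (4*(N:ℝ)) ^ (-(α*γ)))
      ≤ ∑ n ∈ F, ENNReal.ofReal ((4*(N:ℝ)) ^ (-(α*γ))) := by
        rw [Finset.sum_const, Nat.card_Icc]
        have hcard : 2*N + 1 - N = N + 1 := by omega
        rw [hcard, nsmul_eq_mul]
        rw [← ENNReal.ofReal_natCast (N+1), ← ENNReal.ofReal_mul (by positivity)]
        apply ENNReal.ofReal_le_ofReal
        have h4 : (0:ℝ) ≤ (4*(N:ℝ)) ^ (-(α*γ)) := le_of_lt (Real.rpow_pos_of_pos (by positivity) _)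
        push_cast
        nlinarith
    _ ≤ ∑ n ∈ F, ENNReal.ofReal (hh α γ n) := by
        apply Finset.sum_le_sum
        intro n hn
        apply ENNReal.ofReal_le_ofReal
        rw [hh]
        apply rpow_anti_base (by positivity) ?_ (by nlinarith [hα0 hγ hα1, hγ0 hγ])
        have := (Finset.mem_Icc.1 hn).2
        have : (n:ℝ) ≤ 2*(N:ℝ) := by exact_mod_cast this
        have hN1 : (1:ℝ) ≤ (N:ℝ) := by exact_mod_cast hN
        linarith
    _ ≤ ∑ n ∈ F, μH[(1:ℝ)] (Vseg (cc α n) 0 (hh α γ n)) := by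
        apply Finset.sum_le_sum
        intro n _
        simpa using H_Vseg_ge (le_refl (Vseg (cc α n) 0 (hh α γ n)))
    _ = μH[(1:ℝ)] (⋃ n ∈ F, Vseg (cc α n) 0 (hh α γ n)) :=
        (measure_biUnion_finset hdisj hmeas).symm
    _ ≤ μH[(1:ℝ)] (closedBall (0:E2) r ∩ Adef α γ) :=
        measure_mono (iUnion₂_subset hsub)

end params

section params
variable {γ α : ℝ} (hγ : 1 < γ) (hα1 : γ⁻¹ < α) (hα2 : α < (γ - 1)⁻¹)

include hγ hα1 in
lemma exists_small_cc (r : ℝ) (hr : 0 < r) : ∃ n : ℕ, 2 * cc α n ≤ r := by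
  have hα : (0:ℝ) < α := hα0 hγ hα1
  obtain ⟨n, hn⟩ := exists_nat_ge ((2/r) ^ α⁻¹)
  refine ⟨n, ?_⟩
  have h2r : (0:ℝ) < 2/r := by positivity
  have hbase : (2/r) ^ α⁻¹ ≤ (n:ℝ) + 1 := by linarith [Nat.cast_nonneg (α := ℝ) n]
  have hpow : 2/r ≤ ((n:ℝ)+1) ^ α := by
    calc 2/r = ((2/r) ^ α⁻¹) ^ α := by
          rw [← Real.rpow_mul (le_of_lt h2r), inv_mul_cancel₀ (ne_of_gt hα), Real.rpow_one]
      _ ≤ ((n:ℝ)+1) ^ α := Real.rpow_le_rpow (le_of_lt (Real.rpow_pos_of_pos h2r _)) hbase (le_of_lt hα)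
  have hpos : (0:ℝ) < ((n:ℝ)+1) ^ α := Real.rpow_pos_of_pos (by positivity) _
  rw [cc, Real.rpow_neg (by positivity), mul_comm, inv_mul_le_iff₀ hpos]
  rw [div_le_iff₀ hr] at hpow
  nlinarith

include hγ hα1 hα2 in
lemma coreB (M : ℝ) : ∃ δ : ℝ, 0 < δ ∧ ∀ r : ℝ, 0 < r → r ≤ δ →
    ENNReal.ofReal (M * r) ≤ μH[(1:ℝ)] (closedBall (0:E2) r ∩ Adef α γ) := by
  rcases le_or_gt M 0 with hM | hM
  · exact ⟨1, one_pos, fun r hr _ => by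
      rw [ENNReal.ofReal_of_nonpos (mul_nonpos_of_nonpos_of_nonneg hM (le_of_lt hr))]
      exact zero_le⟩
  have hα : (0:ℝ) < α := hα0 hγ hα1
  have hσ : 0 < 1 + α - α*γ := hσpos hγ hα1 hα2
  set σ := 1 + α - α*γ with hσdef
  set K := 2*M*(4:ℝ)^(α*γ) with hK
  have hKpos : 0 < K := by
    have : (0:ℝ) < (4:ℝ)^(α*γ) := Real.rpow_pos_of_pos (by norm_num) _
    positivity
  obtain ⟨N₁, hN₁⟩ := exists_nat_ge (max 1 (K ^ σ⁻¹))
  have hN₁1 : (1:ℝ) ≤ (N₁:ℝ) := le_trans (le_max_left _ _) hN₁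
  have hN₁K : K ≤ (N₁:ℝ) ^ σ := by
    calc K = (K ^ σ⁻¹) ^ σ := by
          rw [← Real.rpow_mul (le_of_lt hKpos), inv_mul_cancel₀ (ne_of_gt hσ), Real.rpow_one]
      _ ≤ (N₁:ℝ) ^ σ := Real.rpow_le_rpow
          (le_of_lt (Real.rpow_pos_of_pos hKpos _))
          (le_trans (le_max_right _ _) hN₁) (le_of_lt hσ)
  refine ⟨cc α N₁, cc_pos α N₁, fun r hr hrδ => ?_⟩
  have hex := exists_small_cc hγ hα1 r hr
  set N := Nat.find hex with hNdef
  have hNspec : 2 * cc α N ≤ r := Nat.find_spec hex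
  have hNgt : N₁ < N := by
    by_contra h
    push_neg at h
    have : cc α N₁ ≤ cc α N := (cc_strictAnti hγ hα1).antitone h
    linarith [cc_pos α N]
  have hN1 : 1 ≤ N := by omega
  have hmin : ¬ (2 * cc α (N-1) ≤ r) := Nat.find_min hex (by omega)
  push_neg at hmin
  have hccN1 : cc α (N-1) = (N:ℝ) ^ (-α) := by
    rw [cc]
    congr 1
    have : ((N-1 : ℕ):ℝ) = (N:ℝ) - 1 := by
      have : (1:ℕ) ≤ N := hN1
      push_cast [Nat.cast_sub this]
      ring
    rw [this]; ring
  have hrlt : r < 2 * (N:ℝ) ^ (-α) := by rw [← hccN1]; exact hmin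
  -- main numeric inequality:  M * r ≤ N * (4N)^{-αγ}
  have hNR : (1:ℝ) ≤ (N:ℝ) := by exact_mod_cast hN1
  have hNR0 : (0:ℝ) < (N:ℝ) := by linarith
  have hNK : K ≤ (N:ℝ) ^ σ :=
    le_trans hN₁K (Real.rpow_le_rpow (by linarith) (by exact_mod_cast le_of_lt hNgt) (le_of_lt hσ))
  have hsplit : (N:ℝ) ^ σ = (N:ℝ) * ((N:ℝ)^α * ((N:ℝ)^(α*γ))⁻¹) := by
    rw [show σ = 1 + (α + (-(α*γ))) by rw [hσdef]; ring, Real.rpow_add hNR0,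
      Real.rpow_add hNR0, Real.rpow_one, Real.rpow_neg (le_of_lt hNR0)]
  have h4N : (4*(N:ℝ)) ^ (-(α*γ)) = ((4:ℝ)^(α*γ) * (N:ℝ)^(α*γ))⁻¹ := by
    rw [Real.rpow_neg (by positivity), Real.mul_rpow (by norm_num) (le_of_lt hNR0)]
  have hnum : M * r ≤ (N:ℝ) * (4*(N:ℝ)) ^ (-(α*γ)) := by
    have hA1 : (0:ℝ) < (N:ℝ)^α := Real.rpow_pos_of_pos hNR0 _
    have hB1 : (0:ℝ) < (N:ℝ)^(α*γ) := Real.rpow_pos_of_pos hNR0 _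
    have h4 : (0:ℝ) < (4:ℝ)^(α*γ) := Real.rpow_pos_of_pos (by norm_num) _
    have hNα : (N:ℝ)^(-α) = ((N:ℝ)^α)⁻¹ := Real.rpow_neg (le_of_lt hNR0) _
    rw [h4N]
    rw [hsplit] at hNK
    rw [hNα] at hrlt
    have hr2 : M * r ≤ 2 * M * ((N:ℝ)^α)⁻¹ := by
      have := mul_le_mul_of_nonneg_left (le_of_lt hrlt) (le_of_lt hM)
      linarith
    refine le_trans hr2 ?_
    rw [hK] at hNK
    have key : 2*M*(4:ℝ)^(α*γ) * ((N:ℝ)^(α*γ)) ≤ (N:ℝ) * (N:ℝ)^α := by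
      have h5 := mul_le_mul_of_nonneg_right hNK (le_of_lt hB1)
      calc 2*M*(4:ℝ)^(α*γ) * ((N:ℝ)^(α*γ)) ≤ (N:ℝ) * ((N:ℝ)^α * ((N:ℝ)^(α*γ))⁻¹) * ((N:ℝ)^(α*γ)) := h5
        _ = (N:ℝ) * (N:ℝ)^α := by field_simp
    have e1 : 2 * M * ((N:ℝ)^α)⁻¹
        = (2*M*(4:ℝ)^(α*γ) * ((N:ℝ)^(α*γ))) * (((N:ℝ)^α)⁻¹ * ((4:ℝ)^(α*γ) * (N:ℝ)^(α*γ))⁻¹) := by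
      field_simp
    have e2 : (N:ℝ) * ((4:ℝ)^(α*γ) * (N:ℝ)^(α*γ))⁻¹
        = ((N:ℝ) * (N:ℝ)^α) * (((N:ℝ)^α)⁻¹ * ((4:ℝ)^(α*γ) * (N:ℝ)^(α*γ))⁻¹) := by
      field_simp
    rw [e1, e2]
    exact mul_le_mul_of_nonneg_right key (by positivity)
  calc ENNReal.ofReal (M * r) ≤ ENNReal.ofReal ((N:ℝ) * (4*(N:ℝ)) ^ (-(α*γ))) :=
        ENNReal.ofReal_le_ofReal hnum
    _ ≤ _ := hair_lower hγ hα1 hN1 hNspec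

end params

variable {X : Type*} [NormedAddCommGroup X] [NormedSpace ℝ X] [MeasurableSpace X]

lemma ballVol_ne_top : ballVol 1 ≠ ⊤ := (measure_closedBall_lt_top).ne
lemma ballVol_ne_zero : ballVol 1 ≠ 0 :=
  (Metric.measure_closedBall_pos volume (0 : EuclideanSpace ℝ (Fin 1)) one_pos).ne'

section params
variable {γ α : ℝ} (hγ : 1 < γ) (hα1 : γ⁻¹ < α) (hα2 : α < (γ - 1)⁻¹)

include hγ hα1 hα2 in
lemma partB : lowerDensity 1 (μH[(1:ℝ)].restrict (Adef α γ)) 0 = ⊤ := by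
  apply ENNReal.eq_top_of_forall_nnreal_le
  intro M
  rw [lowerDensity]
  refine Filter.le_liminf_of_le (by isBoundedDefault) ?_
  obtain ⟨δ, hδ, hbound⟩ := coreB hγ hα1 hα2 ((M:ℝ) * (ballVol 1).toReal)
  filter_upwards [Ioc_mem_nhdsGT hδ]
  rintro r ⟨hr0, hrδ⟩
  rw [Measure.restrict_apply' (Adef_measurable α γ)]
  have hb0 : ballVol 1 * ENNReal.ofReal (r ^ 1) ≠ 0 :=
    mul_ne_zero ballVol_ne_zero (by simp [ENNReal.ofReal_pos.2 (by simpa using hr0), pow_one]; positivity)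
  have hbt : ballVol 1 * ENNReal.ofReal (r ^ 1) ≠ ⊤ :=
    ENNReal.mul_ne_top ballVol_ne_top ENNReal.ofReal_ne_top
  rw [ENNReal.le_div_iff_mul_le (Or.inl hb0) (Or.inl hbt)]
  calc (M : ℝ≥0∞) * (ballVol 1 * ENNReal.ofReal (r ^ 1))
      = ENNReal.ofReal ((M:ℝ) * (ballVol 1).toReal * r) := by
        rw [pow_one, ← ENNReal.ofReal_coe_nnreal,
          ← ENNReal.ofReal_toReal ballVol_ne_top,
          ← ENNReal.ofReal_mul (by positivity), ← ENNReal.ofReal_mul (by positivity),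
          mul_assoc, ENNReal.toReal_ofReal ENNReal.toReal_nonneg]
    _ ≤ μH[(1:ℝ)] (closedBall (0:E2) r ∩ Adef α γ) := hbound r hr0 hrδ

end params

lemma abs_coord_le_norm (q : E2) (i : Fin 2) : |q i| ≤ ‖q‖ := by
  have := abs_coord_le_dist q 0 i
  simpa [dist_zero_right] using this

lemma smul_coord (r : ℝ) (v : E2) (i : Fin 2) : (r • v) i = r * v i := rfl
lemma sub_coord (p q : E2) (i : Fin 2) : (p - q) i = p i - q i := rfl

lemma ECone_open (a v : E2) (ε : ℝ) : IsOpen (ECone a v ε) := by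
  have he : ECone a v ε = ⋃ r : ℝ, {x : E2 | 0 < r ∧ ‖r • (x - a) - v‖ < ε} := by
    ext x; simp [ECone]
  rw [he]
  apply isOpen_iUnion
  intro r
  by_cases hr : 0 < r
  · have h2 : {x : E2 | 0 < r ∧ ‖r • (x - a) - v‖ < ε} = {x | ‖r • (x - a) - v‖ < ε} := by
      ext x; simp [hr]
    rw [h2]
    exact isOpen_lt ((((continuous_id.sub continuous_const).const_smul r).sub
      continuous_const).norm) continuous_const
  · have h2 : {x : E2 | 0 < r ∧ ‖r • (x - a) - v‖ < ε} = ∅ := by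
      ext x; simp only [mem_setOf_eq, mem_empty_iff_false, iff_false, not_and]
      exact fun h => absurd h hr
    rw [h2]; exact isOpen_empty

lemma tanLower_subset_tanUpper (φ : Measure E2) : TanLower 1 φ 0 ⊆ TanUpper 1 φ 0 := by
  intro v hv ε hε
  obtain ⟨η, hη, hb⟩ := hv ε hε
  set K := ‖v‖ + ε with hK
  have hKpos : 0 < K := by positivity
  set φ' := φ.restrict (ECone 0 v ε) with hφ'
  set c₀ := ENNReal.ofReal η / (ballVol 1 * ENNReal.ofReal K) with hc₀
  have hc₀pos : 0 < c₀ := by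
    apply ENNReal.div_pos (by simp [ENNReal.ofReal_pos.2 hη]; positivity)
    exact ENNReal.mul_ne_top ballVol_ne_top ENNReal.ofReal_ne_top
  have hev : ∀ᶠ s in 𝓝[>] (0:ℝ), c₀ ≤
      φ' (closedBall 0 s) / (ballVol 1 * ENNReal.ofReal (s ^ 1)) := by
    filter_upwards [Ioc_mem_nhdsGT (mul_pos hη hKpos)]
    rintro s ⟨hs0, hsη⟩
    set r := s / K with hrdef
    have hr0 : 0 < r := div_pos hs0 hKpos
    have hrη : r ≤ η := by
      rw [hrdef, div_le_iff₀ hKpos]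
      exact hsη
    have hs : s = K * r := by rw [hrdef]; field_simp
    have hball : ball (r • v) (ε * r) ⊆ closedBall (0:E2) s ∩ ECone 0 v ε := by
      intro x hx
      rw [mem_ball] at hx
      have hd : ‖x - r • v‖ < ε * r := by rwa [← dist_eq_norm]
      constructor
      · rw [mem_closedBall_zero_iff]
        calc ‖x‖ ≤ ‖x - r • v‖ + ‖r • v‖ := by
              have := norm_add_le (x - r • v) (r • v); simpa using this
          _ ≤ ε * r + r * ‖v‖ := by
              apply add_le_add (le_of_lt hd)
              rw [norm_smul, Real.norm_eq_abs, abs_of_pos hr0]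
          _ = K * r := by rw [hK]; ring
          _ = s := hs.symm
      · refine ⟨r⁻¹, inv_pos.2 hr0, ?_⟩
        have he : r⁻¹ • (x - 0) - v = r⁻¹ • (x - r • v) := by
          rw [sub_zero, smul_sub, smul_smul, inv_mul_cancel₀ (ne_of_gt hr0), one_smul]
        rw [he, norm_smul, Real.norm_eq_abs, abs_of_pos (inv_pos.2 hr0), inv_mul_lt_iff₀ hr0]
        linarith
    have hmeas : φ' (closedBall 0 s) ≥ ENNReal.ofReal (η * r) := by
      rw [hφ', Measure.restrict_apply' (ECone_open 0 v ε).measurableSet]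
      refine le_trans ?_ (measure_mono hball)
      have := hb r hr0 hrη
      simpa [pow_one] using this
    calc c₀ = ENNReal.ofReal η * ENNReal.ofReal r /
          ((ballVol 1 * ENNReal.ofReal K) * ENNReal.ofReal r) := by
          rw [hc₀, ENNReal.mul_div_mul_right _ _ (by simp [ENNReal.ofReal_pos.2 hr0]; positivity)
            ENNReal.ofReal_ne_top]
      _ = ENNReal.ofReal (η * r) / (ballVol 1 * ENNReal.ofReal (s ^ 1)) := by
          rw [← ENNReal.ofReal_mul (le_of_lt hη)]
          congr 1
          rw [pow_one, hs, ENNReal.ofReal_mul (le_of_lt hKpos), mul_assoc]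
      _ ≤ φ' (closedBall 0 s) / (ballVol 1 * ENNReal.ofReal (s ^ 1)) :=
          ENNReal.div_le_div_right hmeas _
  calc (0:ℝ≥0∞) < c₀ := hc₀pos
    _ ≤ Filter.liminf (fun s : ℝ => φ' (closedBall 0 s) / (ballVol 1 * ENNReal.ofReal (s ^ 1)))
        (𝓝[>] (0:ℝ)) := Filter.le_liminf_of_le (by isBoundedDefault) hev
    _ ≤ upperDensity 1 φ' 0 := Filter.liminf_le_limsup

section params
variable {γ α : ℝ} (hγ : 1 < γ) (hα1 : γ⁻¹ < α) (hα2 : α < (γ - 1)⁻¹)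

lemma horiz_mem_tanLower (v : E2) (hv1 : v 1 = 0) :
    v ∈ TanLower 1 (μH[(1:ℝ)].restrict (Adef α γ)) 0 := by
  intro ε hε
  set c := v 0 with hc
  refine ⟨min ε (1/(1+|c|+ε)), lt_min hε (by positivity), ?_⟩
  set η := min ε (1/(1+|c|+ε)) with hη
  have hηε : η ≤ ε := min_le_left _ _
  have hη2 : η ≤ 1/(1+|c|+ε) := min_le_right _ _
  intro r hr0 hrη
  have hco : ∀ i, (0 + r • v) i = r * v i := fun i => by
    rw [zero_add]; rfl
  rw [Measure.restrict_apply' (Adef_measurable α γ)]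
  have hkey : ∀ x ∈ Icc (r*c - ε*r/2) (r*c + ε*r/2),
      pt x 0 ∈ ball (0 + r • v) (ε * r) ∩ Adef α γ := by
    intro x hx
    obtain ⟨hx1, hx2⟩ := hx
    constructor
    · rw [mem_ball, dist_pts]
      rw [pt0, pt1, hco 0, hco 1, hv1, mul_zero, ← hc]
      have : Real.sqrt ((x - r*c)^2 + (0 - 0)^2) = |x - r*c| := by
        rw [show (0:ℝ) - 0 = 0 by ring]
        simp [Real.sqrt_sq_eq_abs]
      rw [this]
      have : |x - r*c| ≤ ε*r/2 := abs_le.2 ⟨by linarith, by linarith⟩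
      nlinarith
    · left
      refine ⟨rfl, ?_⟩
      rw [pt0]
      have hb1 : r * (|c| + ε) ≤ 1 := by
        have h1 : 0 < 1 + |c| + ε := by positivity
        have h2 : r ≤ 1/(1+|c|+ε) := le_trans hrη hη2
        have h3 : r * (1+|c|+ε) ≤ 1 := by
          have := mul_le_mul_of_nonneg_right h2 (le_of_lt h1)
          rw [div_mul_cancel₀ 1 (ne_of_gt h1)] at this
          linarith
        nlinarith
      have habs : |x| ≤ r*|c| + ε*r/2 := by
        apply abs_le.2
        constructor <;> nlinarith [neg_abs_le c, le_abs_self c]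
      nlinarith [abs_nonneg c]
  have := H_horiz_ge (S := ball (0 + r • v) (ε * r) ∩ Adef α γ) hkey
  refine le_trans ?_ this
  apply ENNReal.ofReal_le_ofReal
  have : r*c + ε*r/2 - (r*c - ε*r/2) = ε * r := by ring
  rw [this, pow_one]
  nlinarith

lemma tanUpper_subset_horiz (v : E2)
    (hv : v ∈ TanUpper 1 (μH[(1:ℝ)].restrict (Adef α γ)) 0) (hγ' : 1 < γ)
    (hα1' : γ⁻¹ < α) : v 1 = 0 := by
  by_contra h1
  have hv1 : 0 < |v 1| := abs_pos.2 h1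
  set ε := |v 1|/2 with hε
  have hεpos : 0 < ε := by positivity
  set B := |v 0| + |v 1| with hB
  have hBpos : 0 < B := by positivity
  set r₀ := (|v 1|/(4*B)) ^ (γ-1)⁻¹ with hr₀
  have hr₀pos : 0 < r₀ := Real.rpow_pos_of_pos (by positivity) _
  have hr₀bound : r₀ ^ (γ-1) ≤ |v 1|/(4*B) := by
    rw [hr₀, ← Real.rpow_mul (by positivity), inv_mul_cancel₀ (by linarith : γ - 1 ≠ 0),
      Real.rpow_one]
  -- key emptiness
  have hempty : closedBall (0:E2) r₀ ∩ ECone 0 v ε ∩ Adef α γ = ∅ := by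
    rw [eq_empty_iff_forall_notMem]
    rintro p ⟨⟨hpball, hpcone⟩, hpA⟩
    obtain ⟨u, hu, hnorm⟩ := hpcone
    rw [sub_zero] at hnorm
    have hcoord : ∀ i : Fin 2, |u * p i - v i| < ε := by
      intro i
      have := abs_coord_le_norm (u • p - v) i
      have he : (u • p - v) i = u * p i - v i := rfl
      rw [he] at this
      linarith
    rcases hpA with ⟨hp1, hp0⟩ | hp
    · have := hcoord 1
      rw [hp1, mul_zero, zero_sub, abs_neg] at this
      rw [hε] at this
      linarith
    · rw [mem_iUnion] at hp
      obtain ⟨n, hpn0, hpn1, hpn2⟩ := hp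
      have hccn : |p 0| = cc α n := by
        rcases hpn0 with h | h <;> rw [h, cc]
        · exact abs_of_pos (by rw [← cc]; exact cc_pos α n)
        · rw [abs_neg]; exact abs_of_pos (by rw [← cc]; exact cc_pos α n)
      have hccpos := cc_pos α n
      have hupper : u * cc α n ≤ B := by
        have := hcoord 0
        have h2 : |u * p 0| ≤ |v 0| + ε := by
          have := abs_sub_abs_le_abs_sub (u * p 0) (v 0)
          linarith [le_of_lt (hcoord 0)]
        have h3 : |u * p 0| = u * cc α n := by
          rw [abs_mul, abs_of_pos hu, hccn]
        rw [h3] at h2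
        rw [hB, hε] at *
        linarith
      rcases lt_or_gt_of_ne h1 with hneg | hpos
      · -- v 1 < 0
        have := hcoord 1
        have h2 : u * p 1 - v 1 < ε := lt_of_abs_lt this
        have h3 : 0 ≤ u * p 1 := mul_nonneg (le_of_lt hu) hpn1
        rw [hε, abs_of_neg hneg] at h2
        linarith
      · -- v 1 > 0
        have hv1' : v 1 > 0 := hpos
        have h2 : v 1 - ε < u * p 1 := by
          have := lt_of_abs_lt (abs_sub_comm (u * p 1) (v 1) ▸ hcoord 1)
          linarith
        have hεv : ε = v 1 / 2 := by rw [hε, abs_of_pos hv1']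
        have hup1 : v 1 / 2 < u * p 1 := by rw [hεv] at h2; linarith
        have hp1pos : 0 < p 1 := by
          rcases le_or_gt (p 1) 0 with h | h
          · exfalso
            have : u * p 1 ≤ 0 := mul_nonpos_of_nonneg_of_nonpos (le_of_lt hu) h
            linarith
          · exact h
        -- u > v1/(2 p1) and u ≤ B / cc
        have hccr₀ : cc α n ≤ r₀ := by
          rw [← hccn]
          exact le_trans (abs_coord_le_norm p 0) (mem_closedBall_zero_iff.1 hpball)
        have hrpow : cc α n ^ (γ-1) ≤ |v 1|/(4*B) :=
          le_trans (Real.rpow_le_rpow (le_of_lt hccpos) hccr₀ (by linarith)) hr₀bound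
        have hhh : p 1 ≤ cc α n ^ (γ-1) * cc α n := by
          have hsplit : cc α n ^ γ = cc α n ^ (γ-1) * cc α n := by
            have h9 : cc α n ^ (γ-1) * cc α n ^ (1:ℝ) = cc α n ^ γ := by
              rw [← Real.rpow_add (cc_pos α n)]; ring_nf
            rw [← h9, Real.rpow_one]
          rw [← hsplit, ← hh_eq_cc_rpow]
          exact hpn2
        have habs : |v 1| = v 1 := abs_of_pos hv1'
        -- p 1 ≤ (v1/(4B)) * cc,  and  u * p1 > v1/2,  u * cc ≤ B
        have hrpow' : cc α n ^ (γ-1) ≤ v 1/(4*B) := by rw [← habs]; exact hrpow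
        have hfin : u * p 1 ≤ u * (v 1/(4*B) * cc α n) := by
          apply mul_le_mul_of_nonneg_left ?_ (le_of_lt hu)
          calc p 1 ≤ cc α n ^ (γ-1) * cc α n := hhh
            _ ≤ v 1/(4*B) * cc α n := mul_le_mul_of_nonneg_right hrpow' (le_of_lt hccpos)
        have : u * (v 1/(4*B) * cc α n) = (u * cc α n) * (v 1/(4*B)) := by ring
        rw [this] at hfin
        have hlast : (u * cc α n) * (v 1/(4*B)) ≤ B * (v 1/(4*B)) :=
          mul_le_mul_of_nonneg_right hupper (by positivity)
        have : B * (v 1/(4*B)) = v 1/4 := by field_simp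
        rw [this] at hlast
        linarith
  -- derive contradiction
  have h0 := hv ε hεpos
  have hzero : upperDensity 1 ((μH[(1:ℝ)].restrict (Adef α γ)).restrict (ECone 0 v ε)) 0 = 0 := by
    rw [upperDensity]
    apply le_antisymm ?_ zero_le
    apply Filter.limsup_le_of_le (by isBoundedDefault)
    filter_upwards [Ioc_mem_nhdsGT hr₀pos]
    rintro s ⟨hs0, hsr₀⟩
    have hm : ((μH[(1:ℝ)].restrict (Adef α γ)).restrict (ECone 0 v ε)) (closedBall 0 s) = 0 := by
      rw [Measure.restrict_apply' (ECone_open 0 v ε).measurableSet,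
        Measure.restrict_apply' (Adef_measurable α γ)]
      apply measure_mono_null ?_ (measure_empty (μ := μH[(1:ℝ)]))
      rw [← hempty]
      intro p ⟨⟨hp1, hp2⟩, hp3⟩
      exact ⟨⟨closedBall_subset_closedBall hsr₀ hp1, hp2⟩, hp3⟩
    rw [hm, ENNReal.zero_div]
  rw [hzero] at h0
  exact lt_irrefl 0 h0

end params

theorem stmt12 (γ α : ℝ) (hγ : 1 < γ) (hα1 : γ⁻¹ < α) (hα2 : α < (γ - 1)⁻¹)
    (A : Set (EuclideanSpace ℝ (Fin 2)))
    (hA : A = {p : EuclideanSpace ℝ (Fin 2) | p 1 = 0 ∧ |p 0| ≤ 1} ∪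
      ⋃ n : ℕ, {p : EuclideanSpace ℝ (Fin 2) |
        (p 0 = ((n : ℝ) + 1) ^ (-α) ∨ p 0 = -(((n : ℝ) + 1) ^ (-α))) ∧
        0 ≤ p 1 ∧ p 1 ≤ ((n : ℝ) + 1) ^ (-(α * γ))}) :
    μH[(1 : ℝ)] A < ⊤ ∧
    lowerDensity 1 (μH[(1 : ℝ)].restrict A) 0 = ⊤ ∧
    TanLower 1 (μH[(1 : ℝ)].restrict A) 0 = {v : EuclideanSpace ℝ (Fin 2) | v 1 = 0} ∧
    TanUpper 1 (μH[(1 : ℝ)].restrict A) 0 = {v : EuclideanSpace ℝ (Fin 2) | v 1 = 0} := by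
  have hAdef : A = Adef α γ := by rw [hA]; rfl
  rw [hAdef]
  refine ⟨partA hγ hα1, partB hγ hα1 hα2, ?_, ?_⟩
  · apply Set.Subset.antisymm
    · intro v hv
      exact tanUpper_subset_horiz v (tanLower_subset_tanUpper _ hv) hγ hα1
    · intro v hv
      exact horiz_mem_tanLower v hv
  · apply Set.Subset.antisymm
    · intro v hv
      exact tanUpper_subset_horiz v hv hγ hα1
    · intro v hv
      exact tanLower_subset_tanUpper _ (horiz_mem_tanLower v hv)
end
end
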